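/- Let ℵ be an infinite cardinal and X_i = ∏_{s∈S_i} X_{i,s} (i = 1,…,n) products of metrizable spaces with |S₁| > ℵ, each factor having at least two points, and X = X₁ × ⋯ × Xₙ. Then the following are equivalent: (i) every separately continuous f : X₁ × ⋯ × Xₙ → ℝ depends on at most ℵ coordinates; (iii) every continuous f : X → ℝ depends on at most ℵ coordinates; (x) d(X_{i,s}) ≤ ℵ for all i, s. -/

import Mathlib

universe u

open Cardinal

/-- Property (I_ℵ): every locally finite family of nonempty open sets has cardinality ≤ ℵ. -/
def PropI (c : Cardinal.{u}) (X : Type u) [TopologicalSpace X] : Prop :=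
  ∀ (I : Type u) (U : I → Set X), (∀ i, IsOpen (U i)) → (∀ i, (U i).Nonempty) →
    LocallyFinite U → #I ≤ c

/-- Property (II_ℵ): every pointwise finite family of nonempty open sets has cardinality ≤ ℵ. -/
def PropII (c : Cardinal.{u}) (X : Type u) [TopologicalSpace X] : Prop :=
  ∀ (I : Type u) (U : I → Set X), (∀ i, IsOpen (U i)) → (∀ i, (U i).Nonempty) →
    (∀ x : X, {i | x ∈ U i}.Finite) → #I ≤ c

/-- Property (III_ℵ): every ℵ-pointwise family of nonempty open sets has cardinality ≤ ℵ. -/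
def PropIII (c : Cardinal.{u}) (X : Type u) [TopologicalSpace X] : Prop :=
  ∀ (I : Type u) (U : I → Set X), (∀ i, IsOpen (U i)) → (∀ i, (U i).Nonempty) →
    (∀ x : X, #{i | x ∈ U i} ≤ c) → #I ≤ c


open Cardinal Set

namespace Stmt12Aux

variable {c : Cardinal.{u}}

lemma pigeon {α β : Type u} (hc : ℵ₀ ≤ c) (A : Set α) (g : α → β)
    (hA : ¬ #A ≤ c) (hB : #(Set.range g) ≤ c) :
    ∃ b, ¬ #{a | a ∈ A ∧ g a = b} ≤ c := by
  by_contra h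
  push_neg at h
  apply hA
  have hsub : A ⊆ ⋃ (b : Set.range g), {a | a ∈ A ∧ g a = b.1} := fun a ha =>
    Set.mem_iUnion.2 ⟨⟨g a, Set.mem_range_self a⟩, ha, rfl⟩
  calc #A ≤ #(⋃ (b : Set.range g), {a | a ∈ A ∧ g a = b.1}) := mk_le_mk_of_subset hsub
    _ ≤ #(Set.range g) * ⨆ b : Set.range g, #{a | a ∈ A ∧ g a = (b : β)} := mk_iUnion_le _
    _ ≤ c * c := mul_le_mul' hB (ciSup_le' fun b => h _)
    _ = c := mul_eq_self hc

lemma delta_system_aux (hc : ℵ₀ ≤ c) :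
    ∀ (p : ℕ) {α ι : Type u} [DecidableEq α] (F : ι → Finset α) (A : Set ι),
    (∀ i ∈ A, (F i).card = p) → ¬ #A ≤ c →
    ∃ (I : Set ι) (R : Finset α), I ⊆ A ∧ ¬ #I ≤ c ∧
      ∀ i ∈ I, ∀ j ∈ I, i ≠ j → F i ∩ F j = R := by
  intro p
  induction p with
  | zero =>
    intro α ι _ F A hcard hA
    refine ⟨A, ∅, Set.Subset.rfl, hA, fun i hi j hj hij => ?_⟩
    have : F i = ∅ := Finset.card_eq_zero.1 (hcard i hi)
    simp [this]
  | succ p ih =>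
    intro α ι _ F A hcard hA
    by_cases hx : ∃ x : α, ¬ #{i | i ∈ A ∧ x ∈ F i} ≤ c
    · obtain ⟨x, hx⟩ := hx
      set A' := {i | i ∈ A ∧ x ∈ F i} with hA'
      have hcard' : ∀ i ∈ A', ((F i).erase x).card = p := by
        intro i hi
        rw [Finset.card_erase_of_mem hi.2, hcard i hi.1]
        simp
      obtain ⟨I, R, hIsub, hI, hR⟩ := ih (fun i => (F i).erase x) A' hcard' hx
      refine ⟨I, insert x R, fun i hi => (hIsub hi).1, hI, fun i hi j hj hij => ?_⟩
      have h1 := hR i hi j hj hij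
      ext a
      constructor
      · intro ha
        rcases Finset.mem_inter.1 ha with ⟨hai, haj⟩
        by_cases hax : a = x
        · simp [hax]
        · have : a ∈ (F i).erase x ∩ (F j).erase x :=
            Finset.mem_inter.2 ⟨Finset.mem_erase.2 ⟨hax, hai⟩, Finset.mem_erase.2 ⟨hax, haj⟩⟩
          rw [h1] at this
          exact Finset.mem_insert_of_mem this
      · intro ha
        rcases Finset.mem_insert.1 ha with hax | haR
        · subst hax
          exact Finset.mem_inter.2 ⟨(hIsub hi).2, (hIsub hj).2⟩
        · have : a ∈ (F i).erase x ∩ (F j).erase x := h1 ▸ haR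
          rcases Finset.mem_inter.1 this with ⟨h2, h3⟩
          exact Finset.mem_inter.2 ⟨Finset.mem_of_mem_erase h2, Finset.mem_of_mem_erase h3⟩
    · push_neg at hx
      -- Zorn: maximal pairwise disjoint subfamily
      set 𝒮 : Set (Set ι) :=
        {I | I ⊆ A ∧ ∀ i ∈ I, ∀ j ∈ I, i ≠ j → F i ∩ F j = ∅} with h𝒮
      obtain ⟨M, hM⟩ := zorn_subset 𝒮 (by
        intro ch hch hchain
        refine ⟨⋃₀ ch, ⟨?_, ?_⟩, fun s hs => Set.subset_sUnion_of_mem hs⟩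
        · intro i hi
          obtain ⟨t, ht, hit⟩ := hi
          exact (hch ht).1 hit
        · intro i hi j hj hij
          obtain ⟨ti, hti, hiti⟩ := hi
          obtain ⟨tj, htj, hjtj⟩ := hj
          rcases hchain.total hti htj with h | h
          · exact (hch htj).2 i (h hiti) j hjtj hij
          · exact (hch hti).2 i hiti j (h hjtj) hij)
      rcases hM with ⟨⟨hMA, hMdisj⟩, hMmax⟩
      refine ⟨M, ∅, hMA, ?_, hMdisj⟩
      intro hMc
      apply hA
      -- every j ∈ A is in M or F j meets some F i, i ∈ M
      have hmeet : ∀ j ∈ A, j ∉ M → ∃ x, x ∈ (⋃ (i : M), (F i : Set α)) ∧ x ∈ F j := by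
        intro j hjA hjM
        by_contra hno
        push_neg at hno
        have : insert j M ∈ 𝒮 := by
          constructor
          · exact Set.insert_subset hjA hMA
          · intro i hi k hk hik
            rcases Set.mem_insert_iff.1 hi with rfl | hiM
            · rcases Set.mem_insert_iff.1 hk with rfl | hkM
              · exact absurd rfl hik
              · rw [Finset.eq_empty_iff_forall_notMem]
                intro x hx
                rcases Finset.mem_inter.1 hx with ⟨h1, h2⟩
                exact hno x (Set.mem_iUnion.2 ⟨⟨k, hkM⟩, h2⟩) h1
            · rcases Set.mem_insert_iff.1 hk with rfl | hkM
              · rw [Finset.eq_empty_iff_forall_notMem]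
                intro x hx
                rcases Finset.mem_inter.1 hx with ⟨h1, h2⟩
                exact hno x (Set.mem_iUnion.2 ⟨⟨i, hiM⟩, h1⟩) h2
              · exact hMdisj i hiM k hkM hik
        exact hjM (hMmax this (Set.subset_insert j M) (Set.mem_insert j M))
      -- cardinality count
      classical
      set U := ⋃ (i : M), (F i : Set α) with hU
      have hUc : #U ≤ c := by
        calc #U ≤ #(M : Set ι) * ⨆ i : M, #((F i : Finset α) : Set α) := mk_iUnion_le _
          _ ≤ c * c := by
            refine mul_le_mul' (not_not.1 (by simpa using hMc)) (ciSup_le' fun i => ?_)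
            exact le_trans (le_of_lt (Cardinal.lt_aleph0_of_finite _)) hc
          _ = c := mul_eq_self hc
      have hsub : A ⊆ M ∪ ⋃ (x : U), {j | j ∈ A ∧ (x : α) ∈ F j} := by
        intro j hj
        by_cases hjM : j ∈ M
        · exact Or.inl hjM
        · obtain ⟨x, hxU, hxFj⟩ := hmeet j hj hjM
          exact Or.inr (Set.mem_iUnion.2 ⟨⟨x, hxU⟩, hj, hxFj⟩)
      calc #A ≤ #(M ∪ ⋃ (x : U), {j | j ∈ A ∧ (x : α) ∈ F j} : Set ι) := mk_le_mk_of_subset hsub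
        _ ≤ #(M : Set ι) + #(⋃ (x : U), {j | j ∈ A ∧ (x : α) ∈ F j}) := mk_union_le _ _
        _ ≤ c + c * c := by
          refine add_le_add (not_not.1 (by simpa using hMc)) ?_
          calc #(⋃ (x : U), {j | j ∈ A ∧ (x : α) ∈ F j}) ≤
              #U * ⨆ x : U, #{j | j ∈ A ∧ (x : α) ∈ F j} := mk_iUnion_le _
            _ ≤ c * c := mul_le_mul' hUc (ciSup_le' fun x => hx x)
        _ = c := by rw [mul_eq_self hc, add_eq_self hc]

lemma delta_system {α ι : Type u} [DecidableEq α] (hc : ℵ₀ ≤ c) (F : ι → Finset α)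
    (hι : ¬ #(Set.univ : Set ι) ≤ c) :
    ∃ (I : Set ι) (R : Finset α), ¬ #I ≤ c ∧
      ∀ i ∈ I, ∀ j ∈ I, i ≠ j → F i ∩ F j = R := by
  obtain ⟨b, hb⟩ := pigeon hc Set.univ (fun i => ULift.up.{u} ((F i).card)) hι
    (le_trans mk_le_aleph0 hc)
  obtain ⟨I, R, _, hI, hR⟩ := delta_system_aux hc b.down F
    {a | a ∈ (Set.univ : Set ι) ∧ ULift.up.{u} ((F a).card) = b}
    (fun i hi => by have := hi.2; exact congrArg ULift.down this) hb
  exact ⟨I, R, hI, hR⟩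



variable {c : Cardinal.{u}}

lemma card_lift_subtype {ι : Type u} (G : Set ι) (P : ι → Prop)
    (h : ¬ #{g : ↥G | P ↑g} ≤ c) : ¬ #{s : ι | ∃ _ : s ∈ G, P s} ≤ c := by
  intro hle
  apply h
  refine le_trans (mk_le_of_injective (f := fun x : {g : ↥G | P ↑g} =>
    (⟨(x.1 : ι), x.1.2, x.2⟩ : {s : ι | ∃ _ : s ∈ G, P s})) ?_) hle
  intro a b hab
  apply Subtype.ext
  apply Subtype.ext
  have h2 := congrArg (fun z : {s : ι | ∃ _ : s ∈ G, P s} => (z : ι)) hab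
  exact h2

lemma prod_point_in_many {S : Type u} {Y : S → Type u} [∀ s, TopologicalSpace (Y s)]
    (hc : ℵ₀ ≤ c) (hne : ∀ s, Nonempty (Y s))
    (D : ∀ s, Set (Y s)) (hD : ∀ s, Dense (D s)) (hDc : ∀ s, #(D s) ≤ c)
    {ι : Type u} (U : ι → Set (∀ s, Y s)) (hUo : ∀ i, IsOpen (U i))
    (hUne : ∀ i, (U i).Nonempty) (hι : ¬ #(Set.univ : Set ι) ≤ c) :
    ∃ x, ¬ #{i | x ∈ U i} ≤ c := by
  classical
  -- choose points and basic boxes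
  have hbox : ∀ i, ∃ (x₀ : ∀ s, Y s) (F : Finset S) (w : ∀ s, Set (Y s)),
      (∀ s ∈ F, IsOpen (w s) ∧ x₀ s ∈ w s) ∧ (F : Set S).pi w ⊆ U i := by
    intro i
    obtain ⟨x₀, hx₀⟩ := hUne i
    obtain ⟨F, w, h1, h2⟩ := (isOpen_pi_iff.1 (hUo i)) x₀ hx₀
    exact ⟨x₀, F, w, h1, h2⟩
  choose x₀ F w hw hsub using hbox
  -- Δ-system
  obtain ⟨I, R, hI, hR⟩ := delta_system hc F hι
  have hInf : Infinite ↥I := by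
    rw [Cardinal.infinite_iff]
    exact le_trans hc (le_of_not_ge hI)
  have hRF : ∀ i ∈ I, (R : Set S) ⊆ (F i : Set S) := by
    intro i hi t ht
    obtain ⟨j, hij⟩ := exists_ne (⟨i, hi⟩ : ↥I)
    have := hR i hi j.1 j.2 (fun h => hij (Subtype.ext h.symm))
    rw [← this] at ht
    exact Finset.mem_coe.2 (Finset.mem_inter.1 (Finset.mem_coe.1 ht)).1
  -- choose dense points at root coordinates
  have hDne : ∀ s, (D s).Nonempty := fun s => (hD s).nonempty
  have hdch : ∀ i : ι, ∃ d : ∀ t : ↥R, ↥(D (t : S)),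
      i ∈ I → ∀ t : ↥R, (d t : Y (t : S)) ∈ w i (t : S) := by
    intro i
    by_cases hi : i ∈ I
    · have : ∀ t : ↥R, ∃ d : ↥(D (t : S)), (d : Y (t : S)) ∈ w i (t : S) := by
        intro t
        have htF : (t : S) ∈ F i := hRF i hi t.2
        have hop := (hw i (t : S) htF).1
        have hnem : (w i (t : S)).Nonempty := ⟨x₀ i (t : S), (hw i (t : S) htF).2⟩
        obtain ⟨d, hd1, hd2⟩ := (hD (t : S)).exists_mem_open hop hnem
        exact ⟨⟨d, hd1⟩, hd2⟩
      choose d hd using this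
      exact ⟨d, fun _ => hd⟩
    · exact ⟨fun t => ⟨(hDne (t : S)).choose, (hDne (t : S)).choose_spec⟩, fun h => absurd h hi⟩
  choose d hd using hdch
  -- pigeonhole on the root values
  have hrange : #(Set.range d) ≤ c := by
    refine le_trans (le_trans (mk_le_mk_of_subset (Set.subset_univ _)) (le_of_eq mk_univ)) ?_
    rw [mk_pi]
    refine le_trans (Cardinal.prod_le_prod _ (fun _ => c) (fun t => hDc (t : S))) ?_
    rw [Cardinal.prod_const]
    simp only [lift_id]
    exact pow_le hc (Cardinal.lt_aleph0_of_finite ↥R)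
  obtain ⟨d', hd'⟩ := pigeon hc I d hI hrange
  set I₂ := {i | i ∈ I ∧ d i = d'} with hI₂
  -- construct the point
  set x : ∀ s, Y s := fun s =>
    if h : s ∈ R then (d' ⟨s, h⟩ : Y s)
    else if h2 : ∃ i, i ∈ I₂ ∧ s ∈ F i then x₀ h2.choose s
    else (hne s).some with hx
  refine ⟨x, ?_⟩
  have hmem : ∀ i ∈ I₂, x ∈ U i := by
    intro i hi
    apply hsub i
    intro s hs
    rw [hx]
    by_cases hsR : s ∈ R
    · simp only [dif_pos hsR]
      have := hd i hi.1 ⟨s, hsR⟩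
      rw [hi.2] at this
      exact this
    · have h2 : ∃ j, j ∈ I₂ ∧ s ∈ F j := ⟨i, hi, hs⟩
      simp only [dif_neg hsR, dif_pos h2]
      obtain ⟨hj2, hjF⟩ := h2.choose_spec
      by_cases hji : h2.choose = i
      · rw [hji] at *
        exact (hw i s hs).2
      · exfalso
        apply hsR
        have := hR h2.choose hj2.1 i hi.1 hji
        have hmem2 : s ∈ F h2.choose ∩ F i := Finset.mem_inter.2 ⟨hjF, hs⟩
        rw [this] at hmem2
        exact hmem2
  intro hle
  exact hd' (le_trans (mk_le_mk_of_subset fun i hi => hmem i hi) hle)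




lemma continuous_essential_card_le {c : Cardinal.{u}} {S : Type u} {Y : S → Type u}
    [∀ s, TopologicalSpace (Y s)]
    (hc : ℵ₀ ≤ c) (hne : ∀ s, Nonempty (Y s))
    (D : ∀ s, Set (Y s)) (hD : ∀ s, Dense (D s)) (hDc : ∀ s, #(D s) ≤ c)
    (f : (∀ s, Y s) → ℝ) (hf : Continuous f) :
    #{s : S | ∃ u v : ∀ t, Y t, (∀ t, t ≠ s → u t = v t) ∧ f u ≠ f v} ≤ c := by
  classical
  by_contra hE
  set E := {s : S | ∃ u v : ∀ t, Y t, (∀ t, t ≠ s → u t = v t) ∧ f u ≠ f v} with hEdef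
  have hwit : ∀ s : ↥E, ∃ uv : (∀ t, Y t) × (∀ t, Y t),
      (∀ t, t ≠ (s : S) → uv.1 t = uv.2 t) ∧ f uv.1 ≠ f uv.2 := by
    intro s
    obtain ⟨u, v, h1, h2⟩ := s.2
    exact ⟨⟨u, v⟩, h1, h2⟩
  choose uv huv hfuv using hwit
  set u : ↥E → ∀ t, Y t := fun s => (uv s).1 with hu
  set v : ↥E → ∀ t, Y t := fun s => (uv s).2 with hv
  have huv' : ∀ (s : ↥E) (t : S), t ≠ (s : S) → u s t = v s t := huv
  have hfuv' : ∀ s : ↥E, f (u s) ≠ f (v s) := hfuv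
  set ε : ↥E → ℝ := fun s => |f (u s) - f (v s)| with hεdef
  have hεpos : ∀ s, 0 < ε s := fun s => abs_pos.2 (sub_ne_zero.2 (hfuv' s))
  -- small oscillation boxes
  have hbox : ∀ (s : ↥E) (z : ∀ t, Y t), ∃ (I : Finset S) (w : ∀ t, Set (Y t)),
      (∀ t ∈ I, IsOpen (w t) ∧ z t ∈ w t) ∧
      ∀ y : ∀ t, Y t, (∀ t ∈ I, y t ∈ w t) → |f y - f z| < ε s / 4 := by
    intro s z
    have hop : IsOpen (f ⁻¹' Metric.ball (f z) (ε s / 4)) := Metric.isOpen_ball.preimage hf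
    have hz : z ∈ f ⁻¹' Metric.ball (f z) (ε s / 4) := by
      have := hεpos s
      simp only [Set.mem_preimage, Metric.mem_ball, dist_self]
      linarith
    obtain ⟨I, w, h1, h2⟩ := isOpen_pi_iff.1 hop z hz
    refine ⟨I, w, h1, fun y hy => ?_⟩
    have hy2 : y ∈ f ⁻¹' Metric.ball (f z) (ε s / 4) := h2 fun t ht => hy t ht
    simpa [Metric.mem_ball, Real.dist_eq] using hy2
  choose Iu wu hwu hoscu using fun s : ↥E => hbox s (u s)
  choose Iv wv hwv hoscv using fun s : ↥E => hbox s (v s)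
  set F : ↥E → Finset S := fun s => insert (s : S) (Iu s ∪ Iv s) with hF
  set W : ∀ (s : ↥E) (t : S), Set (Y t) := fun s t =>
    (if t ∈ Iu s then wu s t else Set.univ) ∩ (if t ∈ Iv s then wv s t else Set.univ) with hWdef
  set A : ∀ s : ↥E, Set (Y (s : S)) :=
    fun s => if (s : S) ∈ Iu s then wu s (s : S) else Set.univ with hA
  set B : ∀ s : ↥E, Set (Y (s : S)) :=
    fun s => if (s : S) ∈ Iv s then wv s (s : S) else Set.univ with hB
  have huW : ∀ (s : ↥E) (t : S), t ≠ (s : S) → u s t ∈ W s t := by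
    intro s t hts
    constructor
    · split_ifs with h
      · exact (hwu s t h).2
      · trivial
    · split_ifs with h
      · have h4 : u s t = v s t := huv' s t hts
        rw [h4]
        exact (hwv s t h).2
      · trivial
  have huA : ∀ s : ↥E, u s (s : S) ∈ A s := by
    intro s
    simp only [hA]
    split_ifs with h
    · exact (hwu s (s : S) h).2
    · trivial
  have hvB : ∀ s : ↥E, v s (s : S) ∈ B s := by
    intro s
    simp only [hB]
    split_ifs with h
    · exact (hwv s (s : S) h).2
    · trivial
  have hWopen : ∀ (s : ↥E) (t : S), IsOpen (W s t) := by
    intro s t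
    apply IsOpen.inter
    · split_ifs with h
      · exact (hwu s t h).1
      · exact isOpen_univ
    · split_ifs with h
      · exact (hwv s t h).1
      · exact isOpen_univ
  -- key separation property
  have hkey : ∀ (s : ↥E) (y z : ∀ t, Y t),
      (∀ t, t ∈ F s → t ≠ (s : S) → y t ∈ W s t) →
      (∀ t, t ∈ F s → t ≠ (s : S) → z t ∈ W s t) →
      y (s : S) ∈ A s → z (s : S) ∈ B s → ε s / 2 ≤ |f y - f z| := by
    intro s y z hy hz hyA hzB
    have h1 : |f y - f (u s)| < ε s / 4 := by
      apply hoscu s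
      intro t ht
      by_cases hts : t = (s : S)
      · subst hts
        simp only [hA, if_pos ht] at hyA
        exact hyA
      · have hmem : t ∈ F s := Finset.mem_insert_of_mem (Finset.mem_union_left _ ht)
        have := (hy t hmem hts).1
        simpa [if_pos ht] using this
    have h2 : |f z - f (v s)| < ε s / 4 := by
      apply hoscv s
      intro t ht
      by_cases hts : t = (s : S)
      · subst hts
        simp only [hB, if_pos ht] at hzB
        exact hzB
      · have hmem : t ∈ F s := Finset.mem_insert_of_mem (Finset.mem_union_right _ ht)
        have := (hz t hmem hts).2
        simpa [if_pos ht] using this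
    have hεeq : ε s = |f (u s) - f (v s)| := rfl
    have t1 : |f (u s) - f (v s)| ≤ |f (u s) - f y| + |f y - f (v s)| := abs_sub_le _ _ _
    have t2 : |f y - f (v s)| ≤ |f y - f z| + |f z - f (v s)| := abs_sub_le _ _ _
    have t3 : |f (u s) - f y| = |f y - f (u s)| := abs_sub_comm _ _
    linarith
  -- Δ-system
  have huniv : ¬ #(Set.univ : Set ↥E) ≤ c := by
    rw [mk_univ]
    exact hE
  obtain ⟨I, R, hI, hR⟩ := delta_system hc F huniv
  have hInfI : Infinite ↥I := by
    rw [Cardinal.infinite_iff]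
    exact le_trans hc (le_of_not_ge hI)
  have hRF : ∀ s ∈ I, (R : Set S) ⊆ (F s : Set S) := by
    intro s hs t ht
    obtain ⟨j, hij⟩ := exists_ne (⟨s, hs⟩ : ↥I)
    have := hR s hs j.1 j.2 fun h => hij (Subtype.ext h.symm)
    rw [← this] at ht
    exact Finset.mem_coe.2 (Finset.mem_inter.1 (Finset.mem_coe.1 ht)).1
  -- discard s with ↑s ∈ R
  set I₂ := {s | s ∈ I ∧ (s : S) ∉ R} with hI₂def
  have hI₂ : ¬ #I₂ ≤ c := by
    intro h
    apply hI
    have hsub : I ⊆ I₂ ∪ {s : ↥E | s ∈ I ∧ (s : S) ∈ R} := by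
      intro s hs
      by_cases hsR : (s : S) ∈ R
      · exact Or.inr ⟨hs, hsR⟩
      · exact Or.inl ⟨hs, hsR⟩
    have h2 : #{s : ↥E | s ∈ I ∧ (s : S) ∈ R} ≤ c := by
      have : #{s : ↥E | s ∈ I ∧ (s : S) ∈ R} ≤ #(↥(R : Finset S)) := by
        refine mk_le_of_injective (f := fun x : {s : ↥E | s ∈ I ∧ (s : S) ∈ R} =>
          (⟨(x.1 : S), x.2.2⟩ : {t // t ∈ R})) ?_
        intro a b hab
        apply Subtype.ext
        apply Subtype.ext
        have h3 := congrArg (fun z : {t // t ∈ R} => (z : S)) hab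
        exact h3
      exact le_trans this (le_trans (le_of_lt (Cardinal.lt_aleph0_of_finite _)) hc)
    calc #I ≤ #(I₂ ∪ {s : ↥E | s ∈ I ∧ (s : S) ∈ R} : Set ↥E) := mk_le_mk_of_subset hsub
      _ ≤ #I₂ + #{s : ↥E | s ∈ I ∧ (s : S) ∈ R} := mk_union_le _ _
      _ ≤ c + c := add_le_add h h2
      _ = c := add_eq_self hc
  -- membership of u in windows at root coordinates
  have hWne : ∀ s ∈ I₂, ∀ t : ↥R, u s (t : S) ∈ W s (t : S) := by
    intro s hs t
    have : (t : S) ≠ (s : S) := fun h => hs.2 (h ▸ t.2)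
    exact huW s (t : S) this
  -- dense choice at root
  have hDne : ∀ t : S, (D t).Nonempty := fun t => (hD t).nonempty
  have hdch : ∀ s : ↥E, ∃ d : ∀ t : ↥R, ↥(D (t : S)),
      s ∈ I₂ → ∀ t : ↥R, (d t : Y (t : S)) ∈ W s (t : S) := by
    intro s
    by_cases hs : s ∈ I₂
    · have : ∀ t : ↥R, ∃ d : ↥(D (t : S)), (d : Y (t : S)) ∈ W s (t : S) := by
        intro t
        have hnem : (W s (t : S)).Nonempty := ⟨u s (t : S), hWne s hs t⟩
        obtain ⟨d, hd1, hd2⟩ := (hD (t : S)).exists_mem_open (hWopen s (t : S)) hnem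
        exact ⟨⟨d, hd1⟩, hd2⟩
      choose d hd using this
      exact ⟨d, fun _ => hd⟩
    · exact ⟨fun t => ⟨(hDne (t : S)).choose, (hDne (t : S)).choose_spec⟩,
        fun h => absurd h hs⟩
  choose d hd using hdch
  have hrange : #(Set.range d) ≤ c := by
    refine le_trans (le_trans (mk_le_mk_of_subset (Set.subset_univ _)) (le_of_eq mk_univ)) ?_
    rw [mk_pi]
    refine le_trans (Cardinal.prod_le_prod _ (fun _ => c) fun t => hDc (t : S)) ?_
    rw [Cardinal.prod_const]
    simp only [lift_id]
    exact pow_le hc (Cardinal.lt_aleph0_of_finite ↥R)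
  obtain ⟨d', hd'⟩ := pigeon hc I₂ d hI₂ hrange
  set I₃ := {s : ↥E | s ∈ I₂ ∧ d s = d'} with hI₃def
  -- pigeonhole on a uniform gap
  have hεnat : ∀ s : ↥E, ∃ m : ℕ, 1 / ((m : ℝ) + 1) < ε s := fun s =>
    exists_nat_one_div_lt (hεpos s)
  choose mf hmf using hεnat
  have hrange2 : #(Set.range fun s : ↥E => ULift.up.{u} (mf s)) ≤ c := by
    refine le_trans (le_trans (mk_le_mk_of_subset (Set.subset_univ _)) (le_of_eq mk_univ)) ?_
    exact le_trans mk_le_aleph0 hc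
  obtain ⟨m', hm'⟩ := pigeon hc I₃ (fun s => ULift.up.{u} (mf s)) hd' hrange2
  set I₄ := {s : ↥E | s ∈ I₃ ∧ ULift.up.{u} (mf s) = m'} with hI₄def
  set δ : ℝ := 1 / ((m'.down : ℝ) + 1) / 2 with hδdef
  have hδpos : 0 < δ := by
    rw [hδdef]
    positivity
  have hgap : ∀ s ∈ I₄, δ < ε s / 2 := by
    intro s hs
    have h1 : mf s = m'.down := congrArg ULift.down hs.2
    have := hmf s
    rw [h1] at this
    rw [hδdef]
    linarith
  -- extract a countable sequence
  have hInfI₄ : Infinite ↥I₄ := by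
    rw [Cardinal.infinite_iff]
    exact le_trans hc (le_of_not_ge hm')
  set σ : ℕ → ↥E := fun k => ((Infinite.natEmbedding ↥I₄ k : ↥I₄) : ↥E) with hσ
  have hσinj : Function.Injective σ := fun a b hab =>
    (Infinite.natEmbedding ↥I₄).injective (Subtype.ext hab)
  have hσI₄ : ∀ k, σ k ∈ I₄ := fun k => (Infinite.natEmbedding ↥I₄ k).2
  have hσI₂ : ∀ k, σ k ∈ I₂ := fun k => (hσI₄ k).1.1
  have hσI : ∀ k, σ k ∈ I := fun k => (hσI₂ k).1
  have hσd : ∀ k, d (σ k) = d' := fun k => (hσI₄ k).1.2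
  have hσnR : ∀ k, ((σ k : ↥E) : S) ∉ R := fun k => (hσI₂ k).2
  -- the limit point
  set x : ∀ t, Y t := fun t =>
    if h1 : ∃ k, t = ((σ k : ↥E) : S) then v (σ h1.choose) t
    else if h2 : t ∈ R then (d' ⟨t, h2⟩ : Y t)
    else if h3 : ∃ k, t ∈ F (σ k) then u (σ h3.choose) t
    else (hne t).some with hxdef
  have fa : ∀ k, x ((σ k : ↥E) : S) = v (σ k) ((σ k : ↥E) : S) := by
    intro k
    have hh1 : ∃ k', ((σ k : ↥E) : S) = ((σ k' : ↥E) : S) := ⟨k, rfl⟩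
    rw [hxdef]
    simp only [dif_pos hh1]
    have : σ hh1.choose = σ k := Subtype.ext hh1.choose_spec.symm
    rw [this]
  have fb : ∀ k, ∀ t, t ∈ F (σ k) → t ≠ ((σ k : ↥E) : S) → x t ∈ W (σ k) t := by
    intro k t htF hts
    rw [hxdef]
    by_cases h1 : ∃ k', t = ((σ k' : ↥E) : S)
    · exfalso
      obtain ⟨k', hk'⟩ := h1
      have hne2 : σ k' ≠ σ k := fun h => hts (hk' ▸ congrArg Subtype.val h ▸ rfl)
      have htF' : t ∈ F (σ k') := hk' ▸ Finset.mem_insert_self _ _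
      have hroot := hR (σ k) (hσI k) (σ k') (hσI k') (Ne.symm hne2)
      have : t ∈ F (σ k) ∩ F (σ k') := Finset.mem_inter.2 ⟨htF, htF'⟩
      rw [hroot] at this
      exact hσnR k' (hk' ▸ this)
    · simp only [dif_neg h1]
      by_cases h2 : t ∈ R
      · simp only [dif_pos h2]
        have := hd (σ k) (hσI₂ k) ⟨t, h2⟩
        rw [hσd k] at this
        exact this
      · have h3 : ∃ k', t ∈ F (σ k') := ⟨k, htF⟩
        simp only [dif_neg h2, dif_pos h3]
        have hspec := h3.choose_spec
        by_cases heq : σ h3.choose = σ k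
        · rw [heq]
          exact huW (σ k) t hts
        · exfalso
          apply h2
          have hroot := hR (σ h3.choose) (hσI _) (σ k) (hσI k) heq
          have : t ∈ F (σ h3.choose) ∩ F (σ k) := Finset.mem_inter.2 ⟨hspec, htF⟩
          rw [hroot] at this
          exact this
  set z : ℕ → ∀ t, Y t := fun k =>
    Function.update x ((σ k : ↥E) : S) (u (σ k) ((σ k : ↥E) : S)) with hzdef
  have fd : ∀ k, δ ≤ |f (z k) - f x| := by
    intro k
    have hgapk := hgap (σ k) (hσI₄ k)
    have hk := hkey (σ k) (z k) x ?_ ?_ ?_ ?_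
    · linarith
    · intro t htF hts
      rw [hzdef]
      simp only [Function.update_of_ne hts]
      exact fb k t htF hts
    · intro t htF hts
      exact fb k t htF hts
    · rw [hzdef]
      simp only [Function.update_self]
      exact huA (σ k)
    · rw [fa k]
      exact hvB (σ k)
  have fe : Filter.Tendsto z Filter.atTop (nhds x) := by
    rw [tendsto_pi_nhds]
    intro t
    by_cases h : ∃ k₀, t = ((σ k₀ : ↥E) : S)
    · obtain ⟨k₀, hk₀⟩ := h
      refine Filter.Tendsto.congr' ?_ (tendsto_const_nhds (x := x t))
      rw [Filter.eventuallyEq_iff_exists_mem]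
      refine ⟨{k | k₀ + 1 ≤ k}, Filter.mem_atTop _, ?_⟩
      intro k hk
      have hk' : k₀ + 1 ≤ k := hk
      have hne2 : t ≠ ((σ k : ↥E) : S) := by
        intro heq
        have h5 : σ k = σ k₀ := Subtype.ext (heq ▸ hk₀ ▸ rfl)
        have h6 : k = k₀ := hσinj h5
        omega
      simp only [hzdef, Function.update_of_ne hne2]
    · refine Filter.Tendsto.congr (fun k => ?_) (tendsto_const_nhds (x := x t))
      have hne2 : t ≠ ((σ k : ↥E) : S) := fun heq => h ⟨k, heq⟩
      simp only [hzdef, Function.update_of_ne hne2]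
  have hfz : Filter.Tendsto (fun k => |f (z k) - f x|) Filter.atTop (nhds 0) := by
    have h1 : Filter.Tendsto (fun k => f (z k)) Filter.atTop (nhds (f x)) :=
      (hf.tendsto x).comp fe
    have h2 := (h1.sub (tendsto_const_nhds (x := f x))).abs
    simpa using h2
  have : δ ≤ 0 := ge_of_tendsto hfz (Filter.Eventually.of_forall fd)
  linarith


end Stmt12Aux

theorem stmt12 (c : Cardinal.{u}) (hc : Cardinal.aleph0 ≤ c)
    (n : ℕ) (hn : 0 < n) (S : Fin n → Type u) (X : ∀ i, S i → Type u)
    [∀ i s, TopologicalSpace (X i s)]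
    [∀ i s, TopologicalSpace.MetrizableSpace (X i s)]
    [∀ i s, Nontrivial (X i s)]
    (hS : c < #(S ⟨0, hn⟩)) :
    List.TFAE [
      -- (i) every separately continuous function depends on at most ℵ coordinates
      (∀ f : (∀ i, ∀ s, X i s) → ℝ,
        (∀ (i : Fin n) (x : ∀ j, ∀ s, X j s),
          Continuous fun xi : ∀ s, X i s => f (Function.update x i xi)) →
        ∃ T : ∀ i, Set (S i), (∀ i, #(T i) ≤ c) ∧
          ∀ u v : ∀ i, ∀ s, X i s,
            (∀ i, ∀ s ∈ T i, u i s = v i s) → f u = f v),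
      -- (iii) every continuous function depends on at most ℵ coordinates
      (∀ f : (∀ i, ∀ s, X i s) → ℝ, Continuous f →
        ∃ T : ∀ i, Set (S i), (∀ i, #(T i) ≤ c) ∧
          ∀ u v : ∀ i, ∀ s, X i s,
            (∀ i, ∀ s ∈ T i, u i s = v i s) → f u = f v),
      -- (x) every factor has density at most ℵ
      (∀ i s, ∃ D : Set (X i s), Dense D ∧ #D ≤ c)] := by
  classical
  have hne : ∀ i s, Nonempty (X i s) := fun i s => inferInstance
  tfae_have 1 → 2 := by
    intro h1 f hf
    apply h1 f
    intro i x
    have hupd : Continuous fun xi : ∀ s, X i s => Function.update x i xi := by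
      apply continuous_pi
      intro j
      by_cases hij : j = i
      · subst hij
        simpa [Function.update_self] using
          (continuous_id' : Continuous fun xi : ∀ s, X j s => xi)
      · simp only [Function.update_of_ne hij]
        exact continuous_const
    exact hf.comp hupd
  tfae_have 3 → 1 := by
    intro h3 f hsep
    choose D hDd hDc using h3
    set Ess : ∀ j, Set (S j) := fun j => {s | ∃ u v : ∀ i t, X i t,
      (∀ t, t ≠ s → u j t = v j t) ∧ (∀ j', j' ≠ j → u j' = v j') ∧ f u ≠ f v} with hEss
    have claim1 : ∀ j, #(Ess j) ≤ c := by
      intro j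
      by_contra hEj
      have main : ∀ J : Finset (Fin n), j ∉ J →
          ∃ (G : Set (S j)) (p q : S j → ∀ i t, X i t), ¬ #G ≤ c ∧
          (∀ s ∈ G, (∀ t, t ≠ s → p s j t = q s j t) ∧
            (∀ j', j' ≠ j → p s j' = q s j') ∧ f (p s) ≠ f (q s)) ∧
          (∀ j' ∈ J, ∀ s ∈ G, ∀ s' ∈ G, p s j' = p s' j') := by
        intro J
        induction J using Finset.induction_on with
        | empty =>
          intro _
          have hch : ∀ s : S j, ∃ pq : (∀ i t, X i t) × (∀ i t, X i t),
              s ∈ Ess j → (∀ t, t ≠ s → pq.1 j t = pq.2 j t) ∧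
                (∀ j', j' ≠ j → pq.1 j' = pq.2 j') ∧ f pq.1 ≠ f pq.2 := by
            intro s
            by_cases hs : s ∈ Ess j
            · obtain ⟨u, v, h1, h2, h3'⟩ := hs
              exact ⟨⟨u, v⟩, fun _ => ⟨h1, h2, h3'⟩⟩
            · exact ⟨⟨fun i t => (hne i t).some, fun i t => (hne i t).some⟩,
                fun h => absurd h hs⟩
          choose pq hpq using hch
          exact ⟨Ess j, fun s => (pq s).1, fun s => (pq s).2, hEj,
            fun s hs => hpq s hs, by simp⟩
        | @insert j₀ J hj₀J ih =>
          intro hmem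
          have hj₀ : j₀ ≠ j := fun h => hmem (h ▸ Finset.mem_insert_self _ _)
          have hjJ : j ∉ J := fun h => hmem (Finset.mem_insert_of_mem h)
          obtain ⟨G, p, q, hG, hprops, hcomm⟩ := ih hjJ
          set O : ↥G → Set (∀ t, X j₀ t) := fun g =>
            {y | f (Function.update (p (g : S j)) j₀ y) ≠
              f (Function.update (q (g : S j)) j₀ y)} with hO
          have hOopen : ∀ g, IsOpen (O g) := by
            intro g
            exact (isClosed_eq (hsep j₀ (p (g : S j))) (hsep j₀ (q (g : S j)))).isOpen_compl
          have hOne : ∀ g, (O g).Nonempty := by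
            intro g
            obtain ⟨hg1, hg2, hg3⟩ := hprops (g : S j) g.2
            refine ⟨p (g : S j) j₀, ?_⟩
            have e1 : Function.update (p (g : S j)) j₀ (p (g : S j) j₀) = p (g : S j) :=
              Function.update_eq_self _ _
            have e2 : q (g : S j) j₀ = p (g : S j) j₀ := (hg2 j₀ hj₀).symm
            have e3 : Function.update (q (g : S j)) j₀ (p (g : S j) j₀) = q (g : S j) := by
              rw [← e2]
              exact Function.update_eq_self _ _
            simp only [hO, Set.mem_setOf_eq, e1, e3]
            exact hg3
          have hGuniv : ¬ #(Set.univ : Set ↥G) ≤ c := by rw [mk_univ]; exact hG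
          obtain ⟨y', hy'⟩ := Stmt12Aux.prod_point_in_many hc (hne j₀) (D j₀) (hDd j₀)
            (hDc j₀) O hOopen hOne hGuniv
          have hG'c := Stmt12Aux.card_lift_subtype (c := c) G
            (fun s => f (Function.update (p s) j₀ y') ≠ f (Function.update (q s) j₀ y')) hy'
          refine ⟨{s : S j | ∃ _ : s ∈ G,
              f (Function.update (p s) j₀ y') ≠ f (Function.update (q s) j₀ y')},
            fun s => Function.update (p s) j₀ y', fun s => Function.update (q s) j₀ y',
            hG'c, ?_, ?_⟩
          · intro s hs
            obtain ⟨hsG, hsO⟩ := hs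
            refine ⟨?_, ?_, hsO⟩
            · intro t hts
              have h4 := (hprops s hsG).1 t hts
              simp only [Function.update_of_ne (Ne.symm hj₀)]
              exact h4
            · intro j' hj'
              by_cases hj'0 : j' = j₀
              · subst hj'0; simp only [Function.update_self]
              · simp only [Function.update_of_ne hj'0]
                exact (hprops s hsG).2.1 j' hj'
          · intro j' hj' s hs s' hs'
            by_cases hj'0 : j' = j₀
            · subst hj'0; simp only [Function.update_self]
            · have hj'J : j' ∈ J := by
                rcases Finset.mem_insert.1 hj' with h | h
                · exact absurd h hj'0
                · exact h
              simp only [Function.update_of_ne hj'0]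
              exact hcomm j' hj'J s hs.choose s' hs'.choose
      obtain ⟨G, p, q, hG, hprops, hcomm⟩ := main (Finset.univ.erase j) (by simp)
      have hGne : G.Nonempty := by
        rcases Set.eq_empty_or_nonempty G with h | h
        · exfalso; apply hG; rw [h]; simp
        · exact h
      obtain ⟨s₀, hs₀⟩ := hGne
      have hcomm' : ∀ j', j' ≠ j → ∀ s ∈ G, ∀ s' ∈ G, p s j' = p s' j' := fun j' hj' =>
        hcomm j' (Finset.mem_erase.2 ⟨hj', Finset.mem_univ _⟩)
      have hhc : Continuous fun y => f (Function.update (p s₀) j y) := hsep j (p s₀)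
      have hsubset : G ⊆ {s : S j | ∃ u v : ∀ t, X j t, (∀ t, t ≠ s → u t = v t) ∧
          (fun y => f (Function.update (p s₀) j y)) u ≠
          (fun y => f (Function.update (p s₀) j y)) v} := by
        intro s hs
        obtain ⟨h1, h2, h3'⟩ := hprops s hs
        refine ⟨p s j, q s j, h1, ?_⟩
        have key1 : Function.update (p s₀) j (p s j) = p s := by
          funext j'
          by_cases hj' : j' = j
          · subst hj'; simp only [Function.update_self]
          · simp only [Function.update_of_ne hj']
            exact hcomm' j' hj' s₀ hs₀ s hs
        have key2 : Function.update (p s₀) j (q s j) = q s := by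
          funext j'
          by_cases hj' : j' = j
          · subst hj'; simp only [Function.update_self]
          · simp only [Function.update_of_ne hj']
            rw [hcomm' j' hj' s₀ hs₀ s hs]
            exact h2 j' hj'
        simp only []
        rw [key1, key2]
        exact h3'
      exact hG (le_trans (mk_le_mk_of_subset hsubset)
        (Stmt12Aux.continuous_essential_card_le hc (hne j) (D j) (hDd j) (hDc j) _ hhc))
    have claim2 : ∀ (P : ∀ i t, X i t) (j : Fin n) (y : ∀ t, X j t),
        (∀ s ∈ Ess j, P j s = y s) → f (Function.update P j y) = f P := by
      intro P j y hagree
      have hstep : ∀ Q : Finset (S j),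
          f (Function.update P j fun s => if s ∈ Q then y s else P j s) = f P := by
        intro Q
        induction Q using Finset.induction_on with
        | empty =>
          have he : (fun s => if s ∈ (∅ : Finset (S j)) then y s else P j s) = P j := by
            funext s; simp
          rw [he, Function.update_eq_self]
        | @insert s Q hsQ ih =>
          by_cases hsE : s ∈ Ess j
          · have heq : (fun t => if t ∈ insert s Q then y t else P j t)
                = fun t => if t ∈ Q then y t else P j t := by
              funext t
              by_cases hts : t = s
              · subst hts
                rw [if_pos (Finset.mem_insert_self _ _), if_neg hsQ, hagree t hsE]
              · simp [Finset.mem_insert, hts]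
            rw [heq, ih]
          · have hnot : ∀ u v : ∀ i t, X i t, (∀ t, t ≠ s → u j t = v j t) →
                (∀ j', j' ≠ j → u j' = v j') → f u = f v := by
              intro u v h1 h2
              by_contra hne2
              exact hsE ⟨u, v, h1, h2, hne2⟩
            have h6 := hnot
              (Function.update P j fun t => if t ∈ insert s Q then y t else P j t)
              (Function.update P j fun t => if t ∈ Q then y t else P j t) ?_ ?_
            · rw [h6, ih]
            · intro t hts
              simp only [Function.update_self]
              simp [Finset.mem_insert, hts]
            · intro j' hj'
              simp only [Function.update_of_ne hj']
      have hyc : y ∈ closure {z : ∀ t, X j t |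
          ∃ Q : Finset (S j), z = fun s => if s ∈ Q then y s else P j s} := by
        rw [mem_closure_iff]
        intro o ho hyo
        obtain ⟨I, w, hw, hsub⟩ := isOpen_pi_iff.1 ho y hyo
        refine ⟨fun s => if s ∈ I then y s else P j s,
          hsub (Set.mem_pi.2 fun t ht => ?_), I, rfl⟩
        simp only [Finset.mem_coe] at ht
        simp [ht, (hw t ht).2]
      have himg : (fun z => f (Function.update P j z)) ''
          {z : ∀ t, X j t | ∃ Q : Finset (S j), z = fun s => if s ∈ Q then y s else P j s}
          ⊆ {f P} := by
        rintro - ⟨z, ⟨Q, rfl⟩, rfl⟩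
        exact hstep Q
      have hmem2 : f (Function.update P j y) ∈ closure ((fun z => f (Function.update P j z)) ''
          {z : ∀ t, X j t | ∃ Q : Finset (S j), z = fun s => if s ∈ Q then y s else P j s}) :=
        image_closure_subset_closure_image (hsep j P) ⟨y, hyc, rfl⟩
      have h5 : f (Function.update P j y) ∈ closure {f P} := closure_mono himg hmem2
      rw [closure_singleton] at h5
      exact h5
    refine ⟨fun i => Ess i, claim1, ?_⟩
    intro u v hagree
    have hstep : ∀ J : Finset (Fin n), f (fun i => if i ∈ J then v i else u i) = f u := by
      intro J
      induction J using Finset.induction_on with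
      | empty => simp
      | @insert j J hjJ ih =>
        have heq : (fun i => if i ∈ insert j J then v i else u i)
            = Function.update (fun i => if i ∈ J then v i else u i) j (v j) := by
          funext i
          by_cases hij : i = j
          · subst hij; simp [hjJ]
          · simp [Finset.mem_insert, hij, Function.update_of_ne hij]
        rw [heq, claim2 _ j (v j) ?_, ih]
        intro s hs
        simpa [hjJ] using hagree j s hs
    have h5 := hstep Finset.univ
    simp only [Finset.mem_univ, if_true] at h5
    exact h5.symm
  tfae_have 2 → 3 := by
    intro h2
    by_contra hx
    push_neg at hx
    obtain ⟨i0, s0, hYd⟩ := hx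
    letI : MetricSpace (X i0 s0) := TopologicalSpace.metrizableSpaceMetric (X i0 s0)
    -- maximal separated sets
    have hsepN : ∀ m : ℕ, ∃ N : Set (X i0 s0),
        (∀ y ∈ N, ∀ y' ∈ N, y ≠ y' → 1 / ((m : ℝ) + 1) ≤ dist y y') ∧
        (∀ z, z ∉ N → ∃ y ∈ N, dist z y < 1 / ((m : ℝ) + 1)) := by
      intro m
      obtain ⟨N, hN⟩ := zorn_subset {N : Set (X i0 s0) |
          ∀ y ∈ N, ∀ y' ∈ N, y ≠ y' → 1 / ((m : ℝ) + 1) ≤ dist y y'} (by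
        intro ch hch hchain
        refine ⟨⋃₀ ch, ?_, fun s hs => Set.subset_sUnion_of_mem hs⟩
        intro y hy y' hy' hyy'
        obtain ⟨t, ht, hyt⟩ := hy
        obtain ⟨t', ht', hyt'⟩ := hy'
        rcases hchain.total ht ht' with h | h
        · exact hch ht' y (h hyt) y' hyt' hyy'
        · exact hch ht y hyt y' (h hyt') hyy')
      refine ⟨N, hN.prop, ?_⟩
      intro z hz
      by_contra hno
      push_neg at hno
      apply hz
      have hins : insert z N ∈ {N : Set (X i0 s0) |
          ∀ y ∈ N, ∀ y' ∈ N, y ≠ y' → 1 / ((m : ℝ) + 1) ≤ dist y y'} := by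
        intro y hy y' hy' hyy'
        rcases hy with rfl | hyN
        · rcases hy' with rfl | hy'N
          · exact absurd rfl hyy'
          · exact hno y' hy'N
        · rcases hy' with rfl | hy'N
          · rw [dist_comm]
            exact hno y hyN
          · exact hN.prop y hyN y' hy'N hyy'
      exact hN.mem_of_prop_insert hins
    have hdense : Dense (⋃ m : ℕ, (hsepN m).choose) := by
      rw [Metric.dense_iff]
      intro z r hr
      obtain ⟨m, hm⟩ := exists_nat_one_div_lt hr
      by_cases hz : z ∈ (hsepN m).choose
      · exact ⟨z, Metric.mem_ball_self hr, Set.mem_iUnion.2 ⟨m, hz⟩⟩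
      · obtain ⟨y, hyN, hy⟩ := (hsepN m).choose_spec.2 z hz
        refine ⟨y, ?_, Set.mem_iUnion.2 ⟨m, hyN⟩⟩
        rw [Metric.mem_ball, dist_comm]
        linarith
    have h6 := hYd _ hdense
    have h7 : ∃ m : ℕ, ¬ #((hsepN m).choose) ≤ c := by
      by_contra hall
      push_neg at hall
      have hre : (⋃ m : ℕ, (hsepN m).choose) =
          ⋃ m : ULift.{u} ℕ, (hsepN m.down).choose := by
        ext t
        simp only [Set.mem_iUnion]
        exact ⟨fun ⟨m, hm⟩ => ⟨ULift.up m, hm⟩, fun ⟨m, hm⟩ => ⟨m.down, hm⟩⟩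
      have hle2 : #(⋃ m : ℕ, (hsepN m).choose) ≤ c := by
        rw [hre]
        calc #(⋃ m : ULift.{u} ℕ, (hsepN m.down).choose)
            ≤ #(ULift.{u} ℕ) * ⨆ m : ULift.{u} ℕ, #((hsepN m.down).choose) := mk_iUnion_le _
          _ ≤ c * c := mul_le_mul' (le_trans mk_le_aleph0 hc) (ciSup_le' fun m => hall m.down)
          _ = c := mul_eq_self hc
      exact absurd hle2 (not_le.2 h6)
    obtain ⟨m, hNc⟩ := h7
    set N := (hsepN m).choose with hNdef
    have hNs : ∀ y ∈ N, ∀ y' ∈ N, y ≠ y' → 1 / ((m : ℝ) + 1) ≤ dist y y' :=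
      (hsepN m).choose_spec.1
    have hlt : c < #N := not_le.1 hNc
    -- a large set of coordinates avoiding (i0, s0)
    have hS'c : c < #({t : S ⟨0, hn⟩ |
        (⟨⟨0, hn⟩, t⟩ : Σ i, S i) ≠ ⟨i0, s0⟩} : Set (S ⟨0, hn⟩)) := by
      by_contra hle
      push_neg at hle
      apply absurd hS
      push_neg
      have hcompl : #({t : S ⟨0, hn⟩ |
          (⟨⟨0, hn⟩, t⟩ : Σ i, S i) = ⟨i0, s0⟩} : Set (S ⟨0, hn⟩)) ≤ 1 := by
        rw [Cardinal.mk_le_one_iff_set_subsingleton]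
        intro a ha b hb
        have := ha.trans hb.symm
        obtain ⟨h1, h2⟩ := Sigma.mk.inj_iff.1 this
        exact eq_of_heq h2
      have huniv : (Set.univ : Set (S ⟨0, hn⟩)) =
          {t | (⟨⟨0, hn⟩, t⟩ : Σ i, S i) ≠ ⟨i0, s0⟩} ∪
          {t | (⟨⟨0, hn⟩, t⟩ : Σ i, S i) = ⟨i0, s0⟩} := by
        ext t
        simp only [Set.mem_univ, Set.mem_union, Set.mem_setOf_eq, true_iff]
        tauto
      calc #(S ⟨0, hn⟩) = #(Set.univ : Set (S ⟨0, hn⟩)) := mk_univ.symm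
        _ ≤ _ + _ := huniv ▸ mk_union_le _ _
        _ ≤ c + 1 := add_le_add hle hcompl
        _ ≤ c + c := add_le_add le_rfl (le_trans (le_of_lt one_lt_aleph0) hc)
        _ = c := add_eq_self hc
    obtain ⟨N', hN'sub, hN'card⟩ := Cardinal.le_mk_iff_exists_subset.1
      (Order.succ_le_of_lt hlt)
    obtain ⟨θ⟩ := Cardinal.le_def _ _ |>.1
      (hN'card ▸ Order.succ_le_of_lt hS'c :
        #(↥N') ≤ #({t : S ⟨0, hn⟩ | (⟨⟨0, hn⟩, t⟩ : Σ i, S i) ≠ ⟨i0, s0⟩} : Set (S ⟨0, hn⟩)))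
    -- nontrivial pairs and bump functions on the coordinate spaces
    have habex : ∀ y : ↥N', ∃ ab : X ⟨0, hn⟩ ((θ y : _) : S ⟨0, hn⟩) ×
        X ⟨0, hn⟩ ((θ y : _) : S ⟨0, hn⟩), ab.1 ≠ ab.2 := by
      intro y
      obtain ⟨a, b, hab⟩ := exists_pair_ne (X ⟨0, hn⟩ ((θ y : _) : S ⟨0, hn⟩))
      exact ⟨⟨a, b⟩, hab⟩
    choose ab hab using habex
    have hψex : ∀ y : ↥N', ∃ ψ : X ⟨0, hn⟩ ((θ y : _) : S ⟨0, hn⟩) → ℝ,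
        Continuous ψ ∧ ψ (ab y).1 = 0 ∧ ψ (ab y).2 ≠ 0 := by
      intro y
      letI : MetricSpace (X ⟨0, hn⟩ ((θ y : _) : S ⟨0, hn⟩)) :=
        TopologicalSpace.metrizableSpaceMetric _
      refine ⟨fun t => dist t (ab y).1, continuous_id.dist continuous_const, dist_self _, ?_⟩
      rw [dist_ne_zero]
      exact (hab y).symm
    choose ψ hψc hψa hψb using hψex
    set r : ℝ := (1 / ((m : ℝ) + 1)) / 8 with hrdef
    have hrpos : 0 < r := by rw [hrdef]; positivity
    have hδr : 1 / ((m : ℝ) + 1) = 8 * r := by rw [hrdef]; ring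
    set φ : ↥N' → X i0 s0 → ℝ := fun y t => max (1 - dist t (y : X i0 s0) / r) 0 with hφdef
    have hφc : ∀ y, Continuous (φ y) := fun y =>
      (continuous_const.sub ((continuous_id.dist continuous_const).div_const r)).max
        continuous_const
    have hφ_self : ∀ y, φ y (y : X i0 s0) = 1 := by
      intro y
      simp [hφdef, dist_self]
    have hφ_supp : ∀ y t, φ y t ≠ 0 → dist t (y : X i0 s0) < r := by
      intro y t h
      by_contra hge
      push_neg at hge
      apply h
      rw [hφdef]
      have h8 : (1 : ℝ) ≤ dist t (y : X i0 s0) / r := (one_le_div hrpos).2 hge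
      simp only [max_eq_right_iff]
      linarith
    have hsepN' : ∀ y y' : ↥N', y ≠ y' → 8 * r ≤ dist (y : X i0 s0) (y' : X i0 s0) := by
      intro y y' hyy'
      rw [← hδr]
      exact hNs _ (hN'sub y.2) _ (hN'sub y'.2) fun h => hyy' (Subtype.ext h)
    set F : (∀ i s, X i s) → ℝ := fun x =>
      ∑' y : ↥N', φ y (x i0 s0) * ψ y (x ⟨0, hn⟩ ((θ y : _) : S ⟨0, hn⟩)) with hFdef
    have hev : Continuous fun x' : ∀ i s, X i s => x' i0 s0 :=
      (continuous_apply s0).comp (continuous_apply i0)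
    have hFc : Continuous F := by
      rw [continuous_iff_continuousAt]
      intro x
      have hOop : IsOpen {x' : ∀ i s, X i s | dist (x' i0 s0) (x i0 s0) < r} :=
        Metric.isOpen_ball.preimage hev
      have hxO : x ∈ {x' : ∀ i s, X i s | dist (x' i0 s0) (x i0 s0) < r} := by
        simp only [Set.mem_setOf_eq, dist_self]
        exact hrpos
      by_cases hex : ∃ y0 : ↥N', dist (x i0 s0) (y0 : X i0 s0) < 2 * r
      · obtain ⟨y0, hy0⟩ := hex
        have hloc : ∀ x' ∈ {x' : ∀ i s, X i s | dist (x' i0 s0) (x i0 s0) < r},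
            F x' = φ y0 (x' i0 s0) * ψ y0 (x' ⟨0, hn⟩ ((θ y0 : _) : S ⟨0, hn⟩)) := by
          intro x' hx'
          rw [hFdef]
          apply tsum_eq_single
          intro y hy
          have hφ0 : φ y (x' i0 s0) = 0 := by
            by_contra h0
            have h1 := hφ_supp y _ h0
            have h2 : dist (x i0 s0) (y : X i0 s0) < 2 * r := by
              calc dist (x i0 s0) (y : X i0 s0)
                  ≤ dist (x i0 s0) (x' i0 s0) + dist (x' i0 s0) (y : X i0 s0) :=
                    dist_triangle _ _ _
                _ < r + r := by
                  rw [dist_comm (x i0 s0) (x' i0 s0)]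
                  exact add_lt_add hx' h1
                _ = 2 * r := by ring
            have h3 : dist (y : X i0 s0) (y0 : X i0 s0) < 4 * r := by
              calc dist (y : X i0 s0) (y0 : X i0 s0)
                  ≤ dist (y : X i0 s0) (x i0 s0) + dist (x i0 s0) (y0 : X i0 s0) :=
                    dist_triangle _ _ _
                _ < 2 * r + 2 * r := by
                  rw [dist_comm (y : X i0 s0) (x i0 s0)]
                  exact add_lt_add h2 hy0
                _ = 4 * r := by ring
            have h4 := hsepN' y y0 hy
            linarith
          rw [hφ0, zero_mul]
        have hgc : Continuous fun x' : ∀ i s, X i s =>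
            φ y0 (x' i0 s0) * ψ y0 (x' ⟨0, hn⟩ ((θ y0 : _) : S ⟨0, hn⟩)) :=
          ((hφc y0).comp hev).mul ((hψc y0).comp
            ((continuous_apply _).comp (continuous_apply _)))
        exact hgc.continuousAt.congr
          (Filter.eventuallyEq_of_mem (hOop.mem_nhds hxO) hloc).symm
      · push_neg at hex
        have hloc : ∀ x' ∈ {x' : ∀ i s, X i s | dist (x' i0 s0) (x i0 s0) < r},
            F x' = 0 := by
          intro x' hx'
          rw [hFdef]
          have hz : ∀ y : ↥N',
              φ y (x' i0 s0) * ψ y (x' ⟨0, hn⟩ ((θ y : _) : S ⟨0, hn⟩)) = 0 := by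
            intro y
            have hφ0 : φ y (x' i0 s0) = 0 := by
              by_contra h0
              have h1 := hφ_supp y _ h0
              have h2 : dist (x i0 s0) (y : X i0 s0) < 2 * r := by
                calc dist (x i0 s0) (y : X i0 s0)
                    ≤ dist (x i0 s0) (x' i0 s0) + dist (x' i0 s0) (y : X i0 s0) :=
                      dist_triangle _ _ _
                  _ < r + r := by
                    rw [dist_comm (x i0 s0) (x' i0 s0)]
                    exact add_lt_add hx' h1
                  _ = 2 * r := by ring
              exact absurd h2 (not_lt.2 (hex y))
            rw [hφ0, zero_mul]
          calc (∑' y : ↥N', φ y (x' i0 s0) * ψ y (x' ⟨0, hn⟩ ((θ y : _) : S ⟨0, hn⟩)))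
              = ∑' _ : ↥N', (0 : ℝ) := tsum_congr hz
            _ = 0 := tsum_zero
        exact continuous_const.continuousAt.congr
          (Filter.eventuallyEq_of_mem (hOop.mem_nhds hxO) hloc).symm
    obtain ⟨T, hT, hdep⟩ := h2 F hFc
    -- find an unused coordinate
    have hy9 : ∃ y : ↥N', ((θ y : _) : S ⟨0, hn⟩) ∉ T ⟨0, hn⟩ := by
      by_contra hall
      push_neg at hall
      have hinj : #(↥N') ≤ #(T ⟨0, hn⟩) := by
        refine mk_le_of_injective (f := fun y : ↥N' =>
          (⟨((θ y : _) : S ⟨0, hn⟩), hall y⟩ : ↥(T ⟨0, hn⟩))) ?_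
        intro a b hab'
        have h1 : ((θ a : _) : S ⟨0, hn⟩) = ((θ b : _) : S ⟨0, hn⟩) :=
          congrArg (fun z : ↥(T ⟨0, hn⟩) => (z : S ⟨0, hn⟩)) hab'
        exact θ.injective (Subtype.ext h1)
      rw [hN'card] at hinj
      exact absurd (le_trans hinj (hT ⟨0, hn⟩)) (not_le.2 (Order.lt_succ c))
    obtain ⟨y9, hy9'⟩ := hy9
    -- build the witness points via the sigma type
    set p2 : Σ i, S i := ⟨⟨0, hn⟩, ((θ y9 : _) : S ⟨0, hn⟩)⟩ with hp2
    have hp12 : p2 ≠ ⟨i0, s0⟩ := (θ y9).2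
    set base : ∀ pp : Σ i, S i, X pp.1 pp.2 := fun pp => (hne pp.1 pp.2).some with hbase
    set g1 : ∀ pp : Σ i, S i, X pp.1 pp.2 :=
      Function.update base ⟨i0, s0⟩ ((y9 : ↥N') : X i0 s0) with hg1
    set gu : ∀ pp : Σ i, S i, X pp.1 pp.2 := Function.update g1 p2 (ab y9).1 with hgu
    set gv : ∀ pp : Σ i, S i, X pp.1 pp.2 := Function.update g1 p2 (ab y9).2 with hgv
    set uu : ∀ i s, X i s := fun i s => gu ⟨i, s⟩ with huu
    set vv : ∀ i s, X i s := fun i s => gv ⟨i, s⟩ with hvv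
    have hagree : ∀ i, ∀ s ∈ T i, uu i s = vv i s := by
      intro i s hs
      have hne2 : (⟨i, s⟩ : Σ i, S i) ≠ p2 := by
        intro h
        rw [hp2] at h
        obtain ⟨h1, h2⟩ := Sigma.mk.inj_iff.1 h
        subst h1
        have h3 := eq_of_heq h2
        subst h3
        exact hy9' hs
      simp only [huu, hvv, hgu, hgv, Function.update_of_ne hne2]
    have hval1 : uu i0 s0 = ((y9 : ↥N') : X i0 s0) := by
      simp only [huu, hgu, Function.update_of_ne (Ne.symm hp12), hg1, Function.update_self]
    have hval1v : vv i0 s0 = ((y9 : ↥N') : X i0 s0) := by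
      simp only [hvv, hgv, Function.update_of_ne (Ne.symm hp12), hg1, Function.update_self]
    have hval2 : uu ⟨0, hn⟩ ((θ y9 : _) : S ⟨0, hn⟩) = (ab y9).1 := by
      simp only [huu, hgu, hp2, Function.update_self]
      exact Function.update_self _ _ _
    have hval2v : vv ⟨0, hn⟩ ((θ y9 : _) : S ⟨0, hn⟩) = (ab y9).2 := by
      simp only [hvv, hgv, hp2, Function.update_self]
      exact Function.update_self _ _ _
    have hother : ∀ y : ↥N', y ≠ y9 → φ y ((y9 : ↥N') : X i0 s0) = 0 := by
      intro y hy
      by_contra h0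
      have h1 := hφ_supp y _ h0
      have h4 := hsepN' y9 y (Ne.symm hy)
      linarith
    have hFu : F uu = 0 := by
      simp only [hFdef]
      rw [tsum_eq_single y9 (fun y hy => by
        rw [hval1, hother y hy, zero_mul])]
      rw [hval1, hval2, hφ_self, hψa, one_mul]
    have hFv : F vv ≠ 0 := by
      simp only [hFdef]
      rw [tsum_eq_single y9 (fun y hy => by
        rw [hval1v, hother y hy, zero_mul])]
      rw [hval1v, hval2v, hφ_self, one_mul]
      exact hψb y9
    have hfin := hdep uu vv hagree
    rw [hFu] at hfin
    exact hFv hfin.symm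
  tfae_finish
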